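/- Let q be an odd prime power and n = 2^m with m ≥ 1. The number of self-reciprocal monic irreducible polynomials of degree 2n over F_q equals (q^n - 1)/(2n). -/

import Mathlib

open Polynomial IntermediateField

namespace CarlitzAux

variable {F : Type*} [Field F] [Fintype F] {Ω : Type*} [Field Ω] [Algebra F Ω]

lemma exists_frobAlg (k : ℕ) :
    ∃ ψ : Ω →ₐ[F] Ω, ∀ x : Ω, ψ x = x ^ Fintype.card F ^ k := by
  obtain ⟨s, hp, hcard⟩ := FiniteField.card F (ringChar F)
  haveI : Fact (ringChar F).Prime := ⟨hp⟩
  haveI : CharP Ω (ringChar F) :=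
    charP_of_injective_algebraMap (algebraMap F Ω).injective _
  haveI : ExpChar Ω (ringChar F) := .prime hp
  have hpow : ∀ x : Ω, iterateFrobenius Ω (ringChar F) (s * k) x = x ^ Fintype.card F ^ k := by
    intro x
    rw [iterateFrobenius_def, hcard, ← pow_mul]
  refine ⟨{ toRingHom := iterateFrobenius Ω (ringChar F) (s * k), commutes' := ?_ }, hpow⟩
  intro r
  show iterateFrobenius Ω (ringChar F) (s * k) (algebraMap F Ω r) = algebraMap F Ω r
  rw [hpow, ← map_pow, FiniteField.pow_card_pow]

lemma aeval_pow_card_pow (α : Ω) (g : F[X]) (k : ℕ) :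
    aeval (α ^ Fintype.card F ^ k) g = (aeval α g) ^ Fintype.card F ^ k := by
  obtain ⟨ψ, hψ⟩ := exists_frobAlg (F := F) (Ω := Ω) k
  rw [← hψ, ← hψ, Polynomial.aeval_algHom_apply]

lemma pow_pow_eq_iff {α : Ω} (hα : IsIntegral F α) (h0 : α ≠ 0) (e : ℕ) :
    α ^ Fintype.card F ^ e = α ↔ (minpoly F α).natDegree ∣ e := by
  classical
  set q := Fintype.card F with hqdef
  have hq2 : 1 < q := Fintype.one_lt_card
  set d := (minpoly F α).natDegree with hd
  have hd1 : 0 < d := minpoly.natDegree_pos hα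
  haveI : FiniteDimensional F F⟮α⟯ := IntermediateField.adjoin.finiteDimensional hα
  haveI : Finite F⟮α⟯ := Module.finite_of_finite F
  haveI : Fintype F⟮α⟯ := Fintype.ofFinite _
  have hcardK : Fintype.card F⟮α⟯ = q ^ d := by
    rw [Module.card_eq_pow_finrank (K := F), IntermediateField.adjoin.finrank hα]
  have hgen : (algebraMap F⟮α⟯ Ω) (IntermediateField.AdjoinSimple.gen F α) = α :=
    IntermediateField.AdjoinSimple.algebraMap_gen F α
  -- step 1 : α ^ q ^ d = α
  have step1 : α ^ q ^ d = α := by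
    have h := FiniteField.pow_card_pow 1 (IntermediateField.AdjoinSimple.gen F α)
    rw [pow_one, hcardK] at h
    have := congrArg (algebraMap F⟮α⟯ Ω) h
    rwa [map_pow, hgen] at this
  -- order of α
  set t := orderOf α with htdef
  have hqd1 : 1 ≤ q ^ d := Nat.one_le_pow _ _ (by omega)
  have pow_iff : ∀ e : ℕ, α ^ q ^ e = α ↔ α ^ (q ^ e - 1) = 1 := by
    intro e
    have h1e : 1 ≤ q ^ e := Nat.one_le_pow _ _ (by omega)
    constructor
    · intro h
      have : α ^ (q ^ e - 1) * α = 1 * α := by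
        rw [← pow_succ, Nat.sub_add_cancel h1e, h, one_mul]
      exact mul_right_cancel₀ h0 this
    · intro h
      have : α ^ q ^ e = α ^ (q ^ e - 1) * α := by
        rw [← pow_succ, Nat.sub_add_cancel h1e]
      rw [this, h, one_mul]
  have ht1 : α ^ (q ^ d - 1) = 1 := (pow_iff d).mp step1
  have htdvd : t ∣ q ^ d - 1 := orderOf_dvd_of_pow_eq_one ht1
  have ht0 : t ≠ 0 := by
    intro h
    rw [h] at htdvd
    have h2 := zero_dvd_iff.mp htdvd
    have h3 : 1 < q ^ d := Nat.one_lt_pow (by omega) hq2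
    omega
  have key : ∀ e : ℕ, (α ^ q ^ e = α ↔ orderOf ((q : ZMod t)) ∣ e) := by
    intro e
    have h1e : 1 ≤ q ^ e := Nat.one_le_pow _ _ (by omega)
    rw [pow_iff e]
    constructor
    · intro h
      have ht : t ∣ q ^ e - 1 := orderOf_dvd_of_pow_eq_one h
      have hmod : (1 : ℕ) ≡ q ^ e [MOD t] := (Nat.modEq_iff_dvd' h1e).mpr ht
      have hcast : ((q : ZMod t)) ^ e = 1 := by
        have := (ZMod.natCast_eq_natCast_iff _ _ _).mpr hmod.symm
        rwa [Nat.cast_pow, Nat.cast_one] at this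
      exact orderOf_dvd_of_pow_eq_one hcast
    · intro h
      have hcast : ((q : ZMod t)) ^ e = 1 := orderOf_dvd_iff_pow_eq_one.mp h
      have hc2 : ((q ^ e : ℕ) : ZMod t) = ((1 : ℕ) : ZMod t) := by
        rw [Nat.cast_pow, Nat.cast_one]; exact hcast
      have hmod := (ZMod.natCast_eq_natCast_iff _ _ _).mp hc2
      have ht : t ∣ q ^ e - 1 := (Nat.modEq_iff_dvd' h1e).mp hmod.symm
      exact orderOf_dvd_iff_pow_eq_one.mp ht
  set r := orderOf ((q : ZMod t)) with hrdef
  have hrd : r ∣ d := (key d).mp step1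
  have hr0 : r ≠ 0 := by
    intro h
    rw [h] at hrd
    exact absurd (zero_dvd_iff.mp hrd) (by omega)
  -- all of F⟮α⟯ is fixed by q^r power
  have hstep2 : α ^ q ^ r = α := (key r).mpr dvd_rfl
  have hall : ∀ x : F⟮α⟯, x ^ q ^ r = x := by
    obtain ⟨ψ, hψ⟩ := exists_frobAlg (F := F) (Ω := F⟮α⟯) r
    have hgen' : ψ (IntermediateField.AdjoinSimple.gen F α) =
        IntermediateField.AdjoinSimple.gen F α := by
      rw [hψ]
      apply (algebraMap F⟮α⟯ Ω).injective
      rw [map_pow, hgen]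
      exact hstep2
    have hid : ψ = AlgHom.id F F⟮α⟯ := by
      apply PowerBasis.algHom_ext (IntermediateField.adjoin.powerBasis hα)
      rw [IntermediateField.adjoin.powerBasis_gen, hgen']
      rfl
    intro x
    rw [← hψ, hid]
    rfl
  have hne := FiniteField.X_pow_card_pow_sub_X_ne_zero F⟮α⟯ (n := r) (p := q) hr0 hq2
  have hdeg := FiniteField.X_pow_card_pow_sub_X_natDegree_eq F⟮α⟯ (n := r) (p := q) hr0 hq2
  have hsub : (Finset.univ : Finset F⟮α⟯) ⊆ (X ^ q ^ r - X : F⟮α⟯[X]).roots.toFinset := by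
    intro x _
    rw [Multiset.mem_toFinset, mem_roots hne]
    simp [IsRoot, hall x]
  have hcount : q ^ d ≤ q ^ r := by
    calc q ^ d = Fintype.card F⟮α⟯ := hcardK.symm
      _ = (Finset.univ : Finset F⟮α⟯).card := rfl
      _ ≤ (X ^ q ^ r - X : F⟮α⟯[X]).roots.toFinset.card := Finset.card_le_card hsub
      _ ≤ Multiset.card (X ^ q ^ r - X : F⟮α⟯[X]).roots := Multiset.toFinset_card_le _
      _ ≤ (X ^ q ^ r - X : F⟮α⟯[X]).natDegree := Polynomial.card_roots' _
      _ = q ^ r := hdeg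
  have hdr : d ≤ r := (Nat.pow_le_pow_iff_right hq2).mp hcount
  have hreq : r = d := le_antisymm (Nat.le_of_dvd hd1 hrd) hdr
  rw [key e, hreq]

lemma deg_eq {q n m : ℕ} (hF : Fintype.card F = q) (hm : 1 ≤ m) (hn : n = 2 ^ m)
    {α : Ω} (h1 : α ^ (q ^ n + 1) = 1) (h2 : α ^ 2 ≠ 1) :
    IsIntegral F α ∧ α ≠ 0 ∧ (minpoly F α).natDegree = 2 * n := by
  subst hF
  have h0 : α ≠ 0 := by
    intro h
    rw [h, zero_pow (by omega)] at h1
    exact zero_ne_one h1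
  have hα : IsIntegral F α := by
    refine ⟨X ^ (Fintype.card F ^ n + 1) - C 1, monic_X_pow_sub_C 1 (by omega), ?_⟩
    simp [h1]
  refine ⟨hα, h0, ?_⟩
  have hstar : α ^ Fintype.card F ^ n = α⁻¹ :=
    eq_inv_of_mul_eq_one_right (by rw [← pow_succ', h1])
  have h2n : α ^ Fintype.card F ^ (2 * n) = α := by
    rw [two_mul, pow_add, pow_mul, hstar, inv_pow, hstar, inv_inv]
  have hdvd : (minpoly F α).natDegree ∣ 2 * n := (pow_pow_eq_iff hα h0 _).mp h2n
  have hndvd : ¬ (minpoly F α).natDegree ∣ n := by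
    intro h
    have := (pow_pow_eq_iff hα h0 n).mpr h
    rw [hstar] at this
    apply h2
    rw [sq]
    nth_rewrite 1 [← this]
    exact inv_mul_cancel₀ h0
  have h2n' : 2 * n = 2 ^ (m + 1) := by rw [hn, pow_succ, mul_comm]
  rw [h2n'] at hdvd
  obtain ⟨j, hj, hjeq⟩ := (Nat.dvd_prime_pow Nat.prime_two).mp hdvd
  rcases Nat.lt_or_ge j (m + 1) with hjm | hjm
  · exfalso
    apply hndvd
    rw [hjeq, hn]
    exact pow_dvd_pow 2 (by omega)
  · rw [hjeq, h2n', Nat.le_antisymm hj hjm]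


/-- Claim 1, reverse part. -/

lemma minpoly_reverse {α : Ω} (hα : IsIntegral F α) (h0 : α ≠ 0)
    (hstar : aeval α⁻¹ (minpoly F α) = 0) (hdeg : 2 ≤ (minpoly F α).natDegree)
    (h2F : (2 : F) ≠ 0) :
    (minpoly F α).reverse = minpoly F α := by
  set f := minpoly F α with hf
  have hmon : f.Monic := minpoly.monic hα
  have hirr : Irreducible f := minpoly.irreducible hα
  have hc0 : f.coeff 0 ≠ 0 := minpoly.coeff_zero_ne_zero hα h0
  set c := f.coeff 0 with hc
  have hfne : f ≠ 0 := hmon.ne_zero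
  have htd : f.natTrailingDegree = 0 := natTrailingDegree_eq_zero.mpr (Or.inr hc0)
  have htc : f.trailingCoeff = c := by rw [trailingCoeff, htd]
  have hrevlead : f.reverse.leadingCoeff = c := by rw [reverse_leadingCoeff, htc]
  have hrevdeg : f.reverse.natDegree = f.natDegree := by
    rw [reverse_natDegree, htd, Nat.sub_zero]
  have hglead : (C c⁻¹ * f.reverse).leadingCoeff = 1 := by
    rw [leadingCoeff_mul, leadingCoeff_C, hrevlead, inv_mul_cancel₀ hc0]
  have hgdeg : (C c⁻¹ * f.reverse).natDegree = f.natDegree := by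
    rw [natDegree_C_mul (inv_ne_zero hc0), hrevdeg]
  have hroot : aeval α⁻¹ (C c⁻¹ * f.reverse) = 0 := by
    haveI : Invertible α := invertibleOfNonzero h0
    have hrev := (eval₂_reverse_eq_zero_iff (algebraMap F Ω) α f).mpr
      (by rw [← aeval_def]; exact minpoly.aeval F α)
    rw [invOf_eq_inv] at hrev
    have hrev' : aeval α⁻¹ (f.reverse) = 0 := by rw [aeval_def]; exact hrev
    rw [map_mul, hrev', mul_zero]
  have hmininv : minpoly F α⁻¹ = f := (minpoly.eq_of_irreducible_of_monic hirr hstar hmon).symm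
  have hfdvd : f ∣ C c⁻¹ * f.reverse := by
    have hd := minpoly.dvd F α⁻¹ hroot
    rwa [hmininv] at hd
  have hfg : f = C c⁻¹ * f.reverse := eq_of_dvd_of_natDegree_le_of_leadingCoeff hfdvd
    (le_of_eq hgdeg) (by rw [hmon.leadingCoeff, hglead])
  have hrevf : f.reverse = C c * f := by
    have h2 := congrArg (fun p => C c * p) hfg
    beta_reduce at h2
    rw [← mul_assoc, ← C_mul, mul_inv_cancel₀ hc0, C_1, one_mul] at h2
    exact h2.symm
  have hcc : c * c = 1 := by
    have h00 := congrArg (fun p => coeff p 0) hrevf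
    simp only [coeff_zero_reverse, hmon.leadingCoeff, coeff_C_mul] at h00
    rw [← hc] at h00
    exact h00.symm
  rcases mul_self_eq_one_iff.mp hcc with h1 | h1
  · rw [hrevf, h1, C_1, one_mul]
  · exfalso
    haveI : Invertible (1 : F) := invertibleOne
    have heval := eval₂_reverse_mul_pow (RingHom.id F) (1 : F) f
    rw [invOf_one, one_pow, mul_one, eval₂_at_one, eval₂_at_one] at heval
    simp only [RingHom.id_apply] at heval
    rw [hrevf, h1] at heval
    have heval' : -(eval 1 f) = eval 1 f := by
      conv_rhs => rw [← heval]
      rw [eval_mul, eval_C, neg_one_mul]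
    have hf1 : eval 1 f = 0 := by
      have h2x : (2 : F) * eval 1 f = 0 := by linear_combination (-1 : F) * heval'
      rcases mul_eq_zero.mp h2x with h | h
      · exact absurd h h2F
      · exact h
    have hXdvd : (X - C 1) ∣ f := dvd_iff_isRoot.mpr hf1
    obtain ⟨k, hk⟩ := hXdvd
    rcases hirr.isUnit_or_isUnit hk with hu | hu
    · exact (Polynomial.not_isUnit_X_sub_C 1) hu
    · have hk0 : k ≠ 0 := by
        intro h; rw [h, mul_zero] at hk; exact hfne hk
      have hnd := congrArg natDegree hk
      rw [natDegree_mul (X_sub_C_ne_zero 1) hk0, natDegree_X_sub_C,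
        natDegree_eq_zero_of_isUnit hu] at hnd
      omega

/-- Claim 2 key: a root whose inverse is conjugate satisfies `α^(q^n+1)=1`. -/

lemma root_pow_card_add_one [IsAlgClosed Ω] {n : ℕ} (hn : 0 < n) {α : Ω}
    (hα : IsIntegral F α) (h0 : α ≠ 0)
    (hdeg : (minpoly F α).natDegree = 2 * n)
    (hinv : aeval α⁻¹ (minpoly F α) = 0) (h2 : α ^ 2 ≠ 1) :
    α ^ (Fintype.card F ^ n + 1) = 1 := by
  classical
  set q := Fintype.card F with hq
  set f := minpoly F α with hf
  have hmon : f.Monic := minpoly.monic hα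
  have hirr : Irreducible f := minpoly.irreducible hα
  have hconj : ∀ i : ℕ, aeval (α ^ q ^ i) f = 0 := by
    intro i
    rw [aeval_pow_card_pow, minpoly.aeval, zero_pow (pow_ne_zero i Fintype.card_ne_zero)]
  have hminconj : ∀ i : ℕ, minpoly F (α ^ q ^ i) = f := fun i =>
    (minpoly.eq_of_irreducible_of_monic hirr (hconj i) hmon).symm
  have hint : ∀ i : ℕ, IsIntegral F (α ^ q ^ i) := fun i => hα.pow _
  have hne0 : ∀ i : ℕ, α ^ q ^ i ≠ 0 := fun i => pow_ne_zero _ h0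
  have hkey : ∀ i e : ℕ, ((α ^ q ^ i) ^ q ^ e = α ^ q ^ i ↔ 2 * n ∣ e) := by
    intro i e
    rw [pow_pow_eq_iff (hint i) (hne0 i) e, hminconj i, hdeg]
  have hsep : f.Separable := PerfectField.separable_of_irreducible hirr
  set R : Finset Ω := (f.aroots Ω).toFinset with hR
  have hRcard : R.card = 2 * n := by
    rw [hR, Multiset.toFinset_card_of_nodup
      (nodup_roots (hsep.map (f := algebraMap F Ω)))]
    exact ((natDegree_map (algebraMap F Ω)).symm.trans (IsAlgClosed.splits (f.map (algebraMap F Ω))).natDegree_eq_card_roots).symm.trans hdeg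
  have horb : ∀ i : ℕ, α ^ q ^ i ∈ R := by
    intro i
    rw [hR, Multiset.mem_toFinset, mem_aroots]
    exact ⟨hmon.ne_zero, hconj i⟩
  have main : ∀ i j : ℕ, i < j → α ^ q ^ i = α ^ q ^ j → 2 * n ∣ j - i := by
    intro i j hij heq
    have hstep : (α ^ q ^ i) ^ q ^ (j - i) = α ^ q ^ i := by
      rw [← pow_mul, ← pow_add, Nat.add_sub_cancel' (le_of_lt hij)]
      exact heq.symm
    exact (hkey i (j - i)).mp hstep
  set O : Finset Ω := (Finset.range (2 * n)).image (fun i => α ^ q ^ i) with hO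
  have hOsub : O ⊆ R := by
    intro x hx
    rw [hO, Finset.mem_image] at hx
    obtain ⟨i, _, rfl⟩ := hx
    exact horb i
  have hOcard : O.card = 2 * n := by
    rw [hO, Finset.card_image_of_injOn, Finset.card_range]
    intro i hi j hj hij
    rw [Finset.mem_coe, Finset.mem_range] at hi hj
    rcases lt_trichotomy i j with h | h | h
    · exfalso
      have hd := main i j h hij
      have := Nat.le_of_dvd (by omega) hd
      omega
    · exact h
    · exfalso
      have hd := main j i h hij.symm
      have := Nat.le_of_dvd (by omega) hd
      omega
  have hOR : O = R := Finset.eq_of_subset_of_card_le hOsub (by rw [hRcard, hOcard])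
  have hinvR : α⁻¹ ∈ R := by
    rw [hR, Multiset.mem_toFinset, mem_aroots]
    exact ⟨hmon.ne_zero, hinv⟩
  rw [← hOR, hO, Finset.mem_image] at hinvR
  obtain ⟨i, hi, hieq⟩ := hinvR
  rw [Finset.mem_range] at hi
  have h2i : α ^ q ^ (i + i) = α := by
    rw [pow_add, pow_mul, hieq, inv_pow, hieq, inv_inv]
  have hdvd2 : 2 * n ∣ i + i := by
    have hh := (pow_pow_eq_iff hα h0 (i + i)).mp h2i
    rwa [← hf, hdeg] at hh
  have hi0n : i = 0 ∨ i = n := by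
    obtain ⟨k, hk⟩ := hdvd2
    rcases Nat.lt_or_ge k 2 with h | h
    · interval_cases k <;> omega
    · exfalso
      have : 2 * n * 2 ≤ 2 * n * k := Nat.mul_le_mul_left _ h
      omega
  rcases hi0n with rfl | rfl
  · exfalso
    apply h2
    rw [pow_zero, pow_one] at hieq
    rw [sq]
    nth_rewrite 2 [hieq]
    exact mul_inv_cancel₀ h0
  · rw [pow_succ, hieq, inv_mul_cancel₀ h0]

end CarlitzAux

open CarlitzAux

/-- Carlitz: for odd prime power `q` and `n = 2^m`, `m ≥ 1`, the number of
self-reciprocal monic irreducible polynomials of degree `2n` over `F_q`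
equals `(q^n - 1)/(2n)`. -/
theorem carlitz_pow_two (F : Type*) [Field F] [Fintype F] (q n m : ℕ)
    (hF : Fintype.card F = q) (hq : Odd q) (hm : 1 ≤ m) (hn : n = 2 ^ m) :
    2 * n * ({f : Polynomial F | f.Monic ∧ Irreducible f ∧ f.natDegree = 2 * n ∧
        f.reverse = f}.ncard) = q ^ n - 1 := by
  classical
  subst hF
  set q := Fintype.card F with hqdef
  have hq2 : 1 < q := Fintype.one_lt_card
  have hn2 : 2 ≤ n := by
    rw [hn]
    calc 2 = 2 ^ 1 := by norm_num
    _ ≤ 2 ^ m := Nat.pow_le_pow_right (by norm_num) hm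
  have hn0 : 0 < n := by omega
  -- characteristic facts
  have h2F : (2 : F) ≠ 0 := by
    intro h
    have hchar : ringChar F ∣ 2 := by
      have := (CharP.cast_eq_zero_iff F (ringChar F) 2).mp (by exact_mod_cast h)
      exact this
    obtain ⟨s, hp, hcard⟩ := FiniteField.card F (ringChar F)
    have hr2 : ringChar F = 2 := (Nat.prime_dvd_prime_iff_eq hp Nat.prime_two).mp hchar
    rw [hr2] at hcard
    have heven : Even q := by
      rw [← hqdef] at hcard
      rw [hcard]
      exact (Nat.even_pow).mpr ⟨even_two, by positivity⟩
    exact (Nat.not_even_iff_odd.mpr hq) heven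
  set Ω := AlgebraicClosure F with hΩ
  have h2Ω : (2 : Ω) ≠ 0 := by
    intro h
    apply h2F
    apply (algebraMap F Ω).injective
    rw [map_ofNat, map_zero]
    exact h
  have hne11 : (1 : Ω) ≠ -1 := by
    intro h
    apply h2Ω
    have : (2 : Ω) = 1 + 1 := by norm_num
    rw [this]
    nth_rewrite 2 [h]
    exact add_neg_cancel 1
  set N := q ^ n + 1 with hN
  have hNpos : 0 < N := by positivity
  have hNeven : Even N := Odd.add_one (hq.pow)
  have hNΩ : ((N : ℕ) : Ω) = 1 := by
    have hqΩ : ((q : ℕ) : Ω) = 0 := by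
      obtain ⟨s, hp, hcard⟩ := FiniteField.card F (ringChar F)
      haveI : CharP Ω (ringChar F) :=
        charP_of_injective_algebraMap (algebraMap F Ω).injective _
      rw [(CharP.cast_eq_zero_iff Ω (ringChar F) q)]
      rw [← hqdef] at hcard
      rw [hcard]
      exact dvd_pow_self _ (by exact_mod_cast s.ne_zero)
    rw [hN]
    push_cast
    rw [hqΩ, zero_pow (by omega), zero_add]
  set P : Polynomial Ω := X ^ N - C 1 with hP
  have hPsep : P.Separable := separable_X_pow_sub_C (1 : Ω) (by rw [hNΩ]; exact one_ne_zero) one_ne_zero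
  have hPne : P ≠ 0 := X_pow_sub_C_ne_zero hNpos 1
  have hProots : Multiset.card P.roots = N := by
    have := (splits_iff_card_roots (f := P)).mp (IsAlgClosed.splits P)
    rw [this, hP, natDegree_X_pow_sub_C]
  set Sfin := P.roots.toFinset \ {1, -1} with hS
  have mem_Sfin : ∀ β : Ω, β ∈ Sfin ↔ β ^ N = 1 ∧ β ^ 2 ≠ 1 := by
    intro β
    rw [hS, Finset.mem_sdiff, Multiset.mem_toFinset, mem_roots hPne]
    have hroot : P.IsRoot β ↔ β ^ N = 1 := by
      rw [hP, IsRoot, eval_sub, eval_pow, eval_X, eval_C, sub_eq_zero]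
    have hmem : β ∈ ({1, -1} : Finset Ω) ↔ β ^ 2 = 1 := by
      rw [Finset.mem_insert, Finset.mem_singleton, sq, mul_self_eq_one_iff]
    rw [hroot, hmem]
  -- claim 1
  have claim1 : ∀ β ∈ Sfin, (minpoly F β).Monic ∧ Irreducible (minpoly F β) ∧
      (minpoly F β).natDegree = 2 * n ∧ (minpoly F β).reverse = minpoly F β := by
    intro β hβ
    rw [mem_Sfin] at hβ
    obtain ⟨h1, h2⟩ := hβ
    obtain ⟨hint, h0, hdeg⟩ := deg_eq (Ω := Ω) rfl hm hn h1 h2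
    refine ⟨minpoly.monic hint, minpoly.irreducible hint, hdeg, ?_⟩
    have hstar : β ^ q ^ n = β⁻¹ := eq_inv_of_mul_eq_one_right (by rw [← pow_succ', h1])
    have hinv : aeval β⁻¹ (minpoly F β) = 0 := by
      rw [← hstar, aeval_pow_card_pow, minpoly.aeval,
        zero_pow (pow_ne_zero n Fintype.card_ne_zero)]
    exact minpoly_reverse hint h0 hinv (by omega) h2F
  -- claim 2
  have claim2 : ∀ f : F[X], f.Monic → Irreducible f → f.natDegree = 2 * n → f.reverse = f →
      (∀ β : Ω, β ∈ f.aroots Ω → (β ∈ Sfin ∧ minpoly F β = f)) ∧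
      (f.aroots Ω).toFinset.card = 2 * n ∧ ∃ β : Ω, β ∈ f.aroots Ω := by
    intro f hmon hirr hdeg hrev
    have hc0 : f.coeff 0 = 1 := by
      conv_lhs => rw [← hrev]
      rw [coeff_zero_reverse, hmon.leadingCoeff]
    have hper : ∀ β : Ω, aeval β f = 0 → (β ∈ Sfin ∧ minpoly F β = f) := by
      intro β hβ
      have h0 : β ≠ 0 := by
        intro h
        rw [h, aeval_def, eval₂_at_zero, hc0, map_one] at hβ
        exact one_ne_zero hβ
      have hminβ : minpoly F β = f := (minpoly.eq_of_irreducible_of_monic hirr hβ hmon).symm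
      have hint : IsIntegral F β := ⟨f, hmon, hβ⟩
      have h2 : β ^ 2 ≠ 1 := by
        intro hsq
        have hdvd : minpoly F β ∣ (X ^ 2 - C 1 : F[X]) :=
          minpoly.dvd F β (by simp [hsq])
        have hle := natDegree_le_of_dvd hdvd (X_pow_sub_C_ne_zero (by norm_num) 1)
        rw [hminβ, hdeg, natDegree_X_pow_sub_C] at hle
        omega
      have hinv : aeval β⁻¹ f = 0 := by
        haveI : Invertible β := invertibleOfNonzero h0
        have hrv := (eval₂_reverse_eq_zero_iff (algebraMap F Ω) β f).mpr
          (by rw [← aeval_def]; exact hβ)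
        rw [invOf_eq_inv, hrev] at hrv
        rw [aeval_def]
        exact hrv
      have h1 := root_pow_card_add_one hn0 hint h0 (by rw [hminβ]; exact hdeg)
        (by rw [hminβ]; exact hinv) h2
      exact ⟨(mem_Sfin β).mpr ⟨h1, h2⟩, hminβ⟩
    refine ⟨fun β hβ => hper β ((mem_aroots.mp hβ).2), ?_, ?_⟩
    · have hsep : f.Separable := PerfectField.separable_of_irreducible hirr
      rw [Multiset.toFinset_card_of_nodup (nodup_roots (hsep.map (f := algebraMap F Ω)))]
      exact (((natDegree_map (algebraMap F Ω)).symm.trans (IsAlgClosed.splits (f.map (algebraMap F Ω))).natDegree_eq_card_roots).symm.trans hdeg)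
    · have hd0 : f.degree ≠ 0 := by
        intro h
        rw [degree_eq_natDegree hmon.ne_zero] at h
        have : f.natDegree = 0 := by exact_mod_cast h
        omega
      obtain ⟨β, hβ⟩ := IsAlgClosed.exists_aeval_eq_zero Ω f hd0
      exact ⟨β, mem_aroots.mpr ⟨hmon.ne_zero, hβ⟩⟩
  -- the finset of polynomials
  set Tfin := Sfin.image (fun β => minpoly F β) with hT
  have hTmem : ∀ f ∈ Tfin, f.Monic ∧ Irreducible f ∧ f.natDegree = 2 * n ∧ f.reverse = f := by
    intro f hf
    rw [hT, Finset.mem_image] at hf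
    obtain ⟨β, hβ, rfl⟩ := hf
    exact claim1 β hβ
  have hsets : {f : F[X] | f.Monic ∧ Irreducible f ∧ f.natDegree = 2 * n ∧ f.reverse = f}
      = ↑Tfin := by
    ext f
    simp only [Set.mem_setOf_eq, Finset.mem_coe]
    constructor
    · rintro ⟨h1, h2, h3, h4⟩
      obtain ⟨hall, hcard, ⟨β, hβ⟩⟩ := claim2 f h1 h2 h3 h4
      obtain ⟨hmem, hminβ⟩ := hall β hβ
      rw [hT, Finset.mem_image]
      exact ⟨β, hmem, hminβ⟩
    · intro hf
      exact hTmem f hf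
  rw [hsets, Set.ncard_coe_finset]
  -- biUnion decomposition
  have hbi : Sfin = Tfin.biUnion (fun f => (f.aroots Ω).toFinset) := by
    ext β
    simp only [Finset.mem_biUnion]
    constructor
    · intro hβ
      refine ⟨minpoly F β, ?_, ?_⟩
      · rw [hT]
        exact Finset.mem_image_of_mem _ hβ
      · obtain ⟨hmon', hirr', hdeg', hrev'⟩ := claim1 β hβ
        rw [Multiset.mem_toFinset, mem_aroots]
        exact ⟨hmon'.ne_zero, minpoly.aeval F β⟩
    · rintro ⟨f, hf, hβ⟩
      obtain ⟨h1, h2, h3, h4⟩ := hTmem f hf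
      exact ((claim2 f h1 h2 h3 h4).1 β (Multiset.mem_toFinset.mp hβ)).1
  have hdisj : ∀ f ∈ Tfin, ∀ g ∈ Tfin, f ≠ g →
      Disjoint ((f.aroots Ω).toFinset) ((g.aroots Ω).toFinset) := by
    intro f hf g hg hfg
    rw [Finset.disjoint_left]
    intro β hβf hβg
    obtain ⟨h1, h2, h3, h4⟩ := hTmem f hf
    obtain ⟨h1', h2', h3', h4'⟩ := hTmem g hg
    have e1 := ((claim2 f h1 h2 h3 h4).1 β (Multiset.mem_toFinset.mp hβf)).2
    have e2 := ((claim2 g h1' h2' h3' h4').1 β (Multiset.mem_toFinset.mp hβg)).2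
    exact hfg (e1 ▸ e2 ▸ rfl)
  have hcardS : Sfin.card = Tfin.card * (2 * n) := by
    rw [hbi, Finset.card_biUnion hdisj]
    rw [Finset.sum_congr rfl (fun f hf => by
      obtain ⟨h1, h2, h3, h4⟩ := hTmem f hf
      exact (claim2 f h1 h2 h3 h4).2.1)]
    rw [Finset.sum_const, smul_eq_mul]
  -- card of Sfin
  have hsub12 : ({1, -1} : Finset Ω) ⊆ P.roots.toFinset := by
    intro x hx
    rw [Finset.mem_insert, Finset.mem_singleton] at hx
    rw [Multiset.mem_toFinset, mem_roots hPne]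
    rcases hx with rfl | rfl
    · rw [hP]
      simp [IsRoot]
    · rw [hP]
      simp only [IsRoot, eval_sub, eval_pow, eval_X, eval_C, sub_eq_zero]
      exact hNeven.neg_one_pow
  have hcard12 : ({1, -1} : Finset Ω).card = 2 := by
    rw [Finset.card_insert_of_notMem (by simp [hne11]), Finset.card_singleton]
  have hrootscard : P.roots.toFinset.card = N := by
    rw [Multiset.toFinset_card_of_nodup (nodup_roots hPsep), hProots]
  have hScard : Sfin.card = N - 2 := by
    rw [hS, Finset.card_sdiff_of_subset hsub12, hrootscard, hcard12]
  have hqn1 : 1 ≤ q ^ n := Nat.one_le_pow _ _ (by omega)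
  rw [hcardS, hN] at hScard
  rw [mul_comm]
  omega
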